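/- Let γ₁ > 0 and a ∈ (0,1), γ_k = γ₁ k^{−a}, Γ_n^{(ℓ)} = ∑_{k=1}^{n} γ_k^{ℓ}, Γ_n = Γ_n^{(1)}. Fix integers R ≥ 2 and M ≥ 2 with a(R+1) < 1, reals c₂,…,c_R, positive reals q₁,…,q_R with ∑ q_r = 1, real weights W₁,…,W_R, and set n_r = ⌊q_r n⌋, m_{r,ℓ} = (M^{−(ℓ−1)} − 1) M^{−(r−2)(ℓ−1)}, q* = min_r q_r, ‖W‖_∞ = max_{1≤r≤R} |W_r|, and Bias⁽¹⁾(n) = ∑_{ℓ=2}^{R} c_ℓ [ (Γ_{n₁}^{(ℓ)}/Γ_{n₁} − q₁^{−a(ℓ−1)} Γ_n^{(ℓ)}/Γ_n) W₁ + ∑_{r=2}^{R} m_{r,ℓ} W_r (Γ_{n_r}^{(ℓ)}/Γ_{n_r} − q_r^{−a(ℓ−1)} Γ_n^{(ℓ)}/Γ_n) ]. Then for every n ≥ ⌈6^{1/(1−a)}/q*⌉, |Bias⁽¹⁾(n)| ≤ C · n^{−(1−a)}, where C = 6 · ((2 − a(R+1))/(1 − a(R+1))) · ‖W‖_∞ ·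 q*^{−1} · ∑_{ℓ=2}^{R} (γ₁ q*^{−a})^{ℓ−1} (1 + ∑_{r=2}^{R} |m_{r,ℓ}|) |c_ℓ|. -/

import Mathlib

open Finset

set_option maxHeartbeats 1000000

private lemma step_upper (b : ℝ) (hb0 : 0 ≤ b) (hb1 : b < 1) (x : ℝ) (hx : 1 ≤ x) :
    (1 - b) * (x + 1) ^ (-b) ≤ (x + 1) ^ (1 - b) - x ^ (1 - b) := by
  have hx0 : (0:ℝ) < x := lt_of_lt_of_le one_pos hx
  have h1b : (0:ℝ) < 1 - b := by linarith
  have hI : ∫ t in x..(x+1), t ^ (-b) = ((x+1) ^ (1-b) - x ^ (1-b)) / (1-b) := by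
    rw [integral_rpow (Or.inl (by linarith))]
    rw [(by ring : -b + 1 = 1 - b)]
  have hmono : (x + 1) ^ (-b) ≤ ∫ t in x..(x+1), t ^ (-b) := by
    have := intervalIntegral.integral_mono_on (by linarith : x ≤ x + 1)
      (intervalIntegrable_const (c := (x+1) ^ (-b)))
      (intervalIntegral.intervalIntegrable_rpow' (by linarith : (-1:ℝ) < -b))
      (fun t ht => Real.rpow_le_rpow_of_nonpos (by linarith [ht.1]) ht.2 (by linarith))
    simpa using this
  rw [hI, le_div_iff₀ h1b] at hmono
  linarith [hmono]

private lemma step_lower (b : ℝ) (hb0 : 0 ≤ b) (hb1 : b < 1) (x : ℝ) (hx : 1 ≤ x) :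
    (x + 1) ^ (1 - b) - x ^ (1 - b) ≤ (1 - b) * x ^ (-b) := by
  have hx0 : (0:ℝ) < x := lt_of_lt_of_le one_pos hx
  have h1b : (0:ℝ) < 1 - b := by linarith
  have hI : ∫ t in x..(x+1), t ^ (-b) = ((x+1) ^ (1-b) - x ^ (1-b)) / (1-b) := by
    rw [integral_rpow (Or.inl (by linarith))]
    rw [(by ring : -b + 1 = 1 - b)]
  have hmono : (∫ t in x..(x+1), t ^ (-b)) ≤ x ^ (-b) := by
    have := intervalIntegral.integral_mono_on (by linarith : x ≤ x + 1)
      (intervalIntegral.intervalIntegrable_rpow' (by linarith : (-1:ℝ) < -b))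
      (intervalIntegrable_const (c := x ^ (-b)))
      (fun t ht => Real.rpow_le_rpow_of_nonpos hx0 ht.1 (by linarith))
    simpa using this
  rw [hI, div_le_iff₀ h1b] at hmono
  linarith [hmono]

private lemma sum_upper (b : ℝ) (hb0 : 0 ≤ b) (hb1 : b < 1) (m : ℕ) (hm : 1 ≤ m) :
    ∑ k ∈ Icc 1 m, (k:ℝ) ^ (-b) ≤ (m:ℝ) ^ (1-b) / (1-b) := by
  have h1b : (0:ℝ) < 1 - b := by linarith
  induction m, hm using Nat.le_induction with
  | base =>
    simp only [Icc_self, sum_singleton, Nat.cast_one, Real.one_rpow]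
    rw [le_div_iff₀ h1b]; linarith
  | succ m hm ih =>
    rw [Finset.sum_Icc_succ_top (by omega : 1 ≤ m + 1)]
    have hst := step_upper b hb0 hb1 (m:ℝ) (by exact_mod_cast hm)
    have : ((m:ℝ) + 1) ^ (1 - b) / (1 - b) - (m:ℝ) ^ (1-b) / (1-b) ≥ ((m:ℝ)+1) ^ (-b) := by
      rw [ge_iff_le, ← sub_div, le_div_iff₀ h1b]; linarith
    push_cast
    linarith

private lemma sum_lower' (b : ℝ) (hb0 : 0 ≤ b) (hb1 : b < 1) (m : ℕ) :
    (((m:ℝ) + 1) ^ (1-b) - 1) / (1-b) ≤ ∑ k ∈ Icc 1 m, (k:ℝ) ^ (-b) := by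
  have h1b : (0:ℝ) < 1 - b := by linarith
  induction m with
  | zero => simp
  | succ m ih =>
    rw [Finset.sum_Icc_succ_top (by omega : 1 ≤ m + 1)]
    have hst := step_lower b hb0 hb1 ((m:ℝ) + 1) (by linarith [Nat.cast_nonneg (α := ℝ) m])
    push_cast
    rw [div_le_iff₀ h1b] at *
    nlinarith [Real.rpow_natCast ((m:ℝ)+1) 1]

private lemma sum_lower (b : ℝ) (hb0 : 0 ≤ b) (hb1 : b < 1) (m : ℕ) :
    ((m:ℝ) ^ (1-b) - 1) / (1-b) ≤ ∑ k ∈ Icc 1 m, (k:ℝ) ^ (-b) := by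
  have h1b : (0:ℝ) < 1 - b := by linarith
  refine le_trans ?_ (sum_lower' b hb0 hb1 m)
  have : (m:ℝ) ^ (1-b) ≤ ((m:ℝ)+1) ^ (1-b) :=
    Real.rpow_le_rpow (Nat.cast_nonneg m) (by linarith) (le_of_lt h1b)
  apply div_le_div_of_nonneg_right (by linarith) (le_of_lt h1b)

private lemma abstract_ratio (a b s t P Q p w : ℝ) (h1a : (0:ℝ) < 1-a) (h1b : (0:ℝ) < 1-b)
    (hsU : s*(1-a) ≤ P) (hsL : P - 1 ≤ s*(1-a)) (htU : t*(1-b) ≤ Q) (htL : Q - 1 ≤ t*(1-b))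
    (hpP : p*P = 1) (hwP : w*P = Q) (hw1 : w ≤ 1) (hw0 : 0 < w) (hp0 : 0 < p)
    (hP5 : 5 ≤ P) (hs0 : 0 < s) :
    |t/s - (1-a)/(1-b)*w| ≤ 5/4*((1-a)/(1-b))*p := by
  have hp5 : p ≤ 1/5 := by nlinarith [mul_nonneg hp0.le (by linarith : (0:ℝ) ≤ P - 5)]
  have e : t/s - (1-a)/(1-b)*w = (t*(1-b) - (1-a)*w*s) / (s*(1-b)) := by
    field_simp
  have e2 : 5/4*((1-a)/(1-b))*p = 5/4*((1-a)*(p*s)) / (s*(1-b)) := by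
    field_simp
  rw [e, e2, abs_div, abs_of_pos (by positivity : (0:ℝ) < s*(1-b))]
  apply div_le_div_of_nonneg_right ?_ (by positivity)
  have h1 : Q - w ≤ w*(s*(1-a)) := by nlinarith [mul_le_mul_of_nonneg_left hsL hw0.le]
  have h2 : w*(s*(1-a)) ≤ Q := by nlinarith [mul_le_mul_of_nonneg_left hsU hw0.le]
  have h3 : 1 - p ≤ p*(s*(1-a)) := by nlinarith [mul_le_mul_of_nonneg_left hsL hp0.le]
  rw [abs_le]
  constructor <;> linarith

private lemma ratio_est (a b : ℝ) (ha : 0 < a) (hab : a ≤ b) (hb : b < 1)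
    (m : ℕ) (hm : (5:ℝ) ≤ (m:ℝ) ^ (1-a)) :
    |(∑ k ∈ Icc 1 m, (k:ℝ) ^ (-b)) / (∑ k ∈ Icc 1 m, (k:ℝ) ^ (-a))
      - (1-a)/(1-b) * (m:ℝ) ^ (a-b)|
    ≤ (5/4) * ((1-a)/(1-b)) * (m:ℝ) ^ (-(1-a)) := by
  have h1b : (0:ℝ) < 1 - b := by linarith
  have h1a : (0:ℝ) < 1 - a := by linarith
  have hm1 : 1 ≤ m := by
    by_contra h
    push_neg at h
    interval_cases m
    rw [Nat.cast_zero, Real.zero_rpow (by linarith : (1:ℝ) - a ≠ 0)] at hm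
    linarith
  have hmpos : (0:ℝ) < (m:ℝ) := by exact_mod_cast hm1
  have hsU : (∑ k ∈ Icc 1 m, (k:ℝ) ^ (-a)) * (1-a) ≤ (m:ℝ) ^ (1-a) := by
    have := sum_upper a (le_of_lt ha) (by linarith) m hm1
    rw [le_div_iff₀ h1a] at this; linarith
  have hsL : (m:ℝ) ^ (1-a) - 1 ≤ (∑ k ∈ Icc 1 m, (k:ℝ) ^ (-a)) * (1-a) := by
    have := sum_lower a (le_of_lt ha) (by linarith) m
    rw [div_le_iff₀ h1a] at this; linarith
  have htU : (∑ k ∈ Icc 1 m, (k:ℝ) ^ (-b)) * (1-b) ≤ (m:ℝ) ^ (1-b) := by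
    have := sum_upper b (by linarith) hb m hm1
    rw [le_div_iff₀ h1b] at this; linarith
  have htL : (m:ℝ) ^ (1-b) - 1 ≤ (∑ k ∈ Icc 1 m, (k:ℝ) ^ (-b)) * (1-b) := by
    have := sum_lower b (by linarith) hb m
    rw [div_le_iff₀ h1b] at this; linarith
  have hpP : (m:ℝ) ^ (-(1-a)) * (m:ℝ) ^ (1-a) = 1 := by
    rw [← Real.rpow_add hmpos]; norm_num
  have hwP : (m:ℝ) ^ (a-b) * (m:ℝ) ^ (1-a) = (m:ℝ) ^ (1-b) := by
    rw [← Real.rpow_add hmpos]; ring_nf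
  have hw1 : (m:ℝ) ^ (a-b) ≤ 1 :=
    Real.rpow_le_one_of_one_le_of_nonpos (by exact_mod_cast hm1) (by linarith)
  have hs0 : (0:ℝ) < ∑ k ∈ Icc 1 m, (k:ℝ) ^ (-a) := by nlinarith
  exact abstract_ratio a b _ _ _ _ _ _ h1a h1b hsU hsL htU htL hpP hwP hw1
    (Real.rpow_pos_of_pos hmpos _) (Real.rpow_pos_of_pos hmpos _) hm hs0

private lemma key_bound (a b qr qs : ℝ) (ha : 0 < a) (hab : a < b) (hb : b < 1)
    (hqs : 0 < qs) (hqsr : qs ≤ qr) (hqr1 : qr ≤ 1)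
    (n : ℕ) (h6 : (6:ℝ) ≤ qs * n) (h6' : (6:ℝ) ≤ (qs * n) ^ (1-a)) :
    |(∑ k ∈ Icc 1 ⌊qr * (n:ℝ)⌋₊, (k:ℝ) ^ (-b)) / (∑ k ∈ Icc 1 ⌊qr * (n:ℝ)⌋₊, (k:ℝ) ^ (-a))
      - qr ^ (a-b) * ((∑ k ∈ Icc 1 n, (k:ℝ) ^ (-b)) / (∑ k ∈ Icc 1 n, (k:ℝ) ^ (-a)))|
    ≤ 4 * ((1-a)/(1-b)) * qs⁻¹ * qs ^ (a-b) * (n:ℝ) ^ (-(1-a)) := by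
  have h1a : (0:ℝ) < 1 - a := by linarith
  have h1b : (0:ℝ) < 1 - b := by linarith
  have hA : (0:ℝ) < (1-a)/(1-b) := by positivity
  set N := (n:ℝ) with hN
  have hN0' : 0 ≤ N := Nat.cast_nonneg n
  have hN6 : 6 ≤ N := le_trans h6 (by nlinarith)
  have hN0 : 0 < N := by linarith
  have hqrN : 6 ≤ qr * N := le_trans h6 (by nlinarith)
  have hqrN0 : 0 < qr * N := by linarith
  set m := ⌊qr * N⌋₊ with hm
  set Mr := (m:ℝ) with hMr
  have hM_le : Mr ≤ qr * N := Nat.floor_le (by positivity)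
  have hM_ge : qr * N - 1 ≤ Mr := by
    have := Nat.lt_floor_add_one (qr * N)
    push_cast at this ⊢
    linarith
  have hM5 : 5 ≤ Mr := by linarith
  have hM0 : 0 < Mr := by linarith
  have h56 : 5/6 * (qs * N) ≤ Mr := by nlinarith
  have h56' : (0:ℝ) < 5/6 * (qs*N) := by linarith
  -- (5/6)^(1-a) ≥ 5/6
  have h56exp : (5/6 : ℝ) ≤ (5/6 : ℝ) ^ (1-a) := by
    have := Real.rpow_le_rpow_of_exponent_ge (by norm_num : (0:ℝ) < 5/6)
      (by norm_num : (5/6:ℝ) ≤ 1) (by linarith : 1 - a ≤ 1)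
    rwa [Real.rpow_one] at this
  have hMa : (5:ℝ) ≤ Mr ^ (1-a) := by
    have e1 : ((5/6 : ℝ) * (qs*N)) ^ (1-a) = (5/6:ℝ)^(1-a) * (qs*N)^(1-a) :=
      Real.mul_rpow (by norm_num) (by positivity)
    have e2 : ((5/6 : ℝ) * (qs*N)) ^ (1-a) ≤ Mr ^ (1-a) :=
      Real.rpow_le_rpow (by positivity) h56 (le_of_lt h1a)
    nlinarith [Real.rpow_pos_of_pos (show (0:ℝ) < qs*N by positivity) (1-a)]
  have hNa : (5:ℝ) ≤ N ^ (1-a) := by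
    have : (qs*N) ^ (1-a) ≤ N ^ (1-a) :=
      Real.rpow_le_rpow (by positivity) (by nlinarith) (le_of_lt h1a)
    linarith
  -- inverse power bound for Mr
  have hMinv : Mr ^ (-(1-a)) ≤ 6/5 * (qs ^ (-(1-a)) * N ^ (-(1-a))) := by
    have e1 : ((5/6 : ℝ) * (qs*N)) ^ (1-a) ≤ Mr ^ (1-a) :=
      Real.rpow_le_rpow (by positivity) h56 (le_of_lt h1a)
    have e2 : ((5/6 : ℝ) * (qs*N)) ^ (1-a) = (5/6:ℝ)^(1-a) * ((qs)^(1-a) * N^(1-a)) := by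
      rw [Real.mul_rpow (by norm_num) (by positivity), Real.mul_rpow (le_of_lt hqs) hN0']
    have hq1 : (0:ℝ) < qs ^ (1-a) := Real.rpow_pos_of_pos hqs _
    have hn1 : (0:ℝ) < N ^ (1-a) := Real.rpow_pos_of_pos hN0 _
    have hm1 : (0:ℝ) < Mr ^ (1-a) := Real.rpow_pos_of_pos hM0 _
    rw [Real.rpow_neg (le_of_lt hM0), Real.rpow_neg (le_of_lt hqs), Real.rpow_neg hN0']
    rw [show (6:ℝ)/5 * ((qs^(1-a))⁻¹ * (N^(1-a))⁻¹) = (5/6 * (qs^(1-a) * N^(1-a)))⁻¹ by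
      field_simp]
    apply inv_anti₀ (by positivity)
    nlinarith
  have hqsexp : qs ^ (-(1-a)) ≤ qs⁻¹ := by
    have := Real.rpow_le_rpow_of_exponent_ge hqs (by linarith : qs ≤ 1)
      (by linarith : -1 ≤ -(1-a))
    rwa [Real.rpow_neg_one] at this
  have hqs1 : (1:ℝ) ≤ qs⁻¹ := by
    simpa using inv_anti₀ hqs (by linarith : qs ≤ 1)
  have hqsab : (1:ℝ) ≤ qs ^ (a-b) := by
    apply Real.one_le_rpow_of_pos_of_le_one_of_nonpos hqs (by linarith) (by linarith)
  have hqrab : qr ^ (a-b) ≤ qs ^ (a-b) :=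
    Real.rpow_le_rpow_of_nonpos hqs hqsr (by linarith)
  have hqrab0 : (0:ℝ) ≤ qr ^ (a-b) := le_of_lt (Real.rpow_pos_of_pos (by linarith) _)
  have hNab0 : (0:ℝ) < N ^ (-(1-a)) := Real.rpow_pos_of_pos hN0 _
  -- ratio estimates
  have hX1 := ratio_est a b ha (le_of_lt hab) hb m hMa
  have hX3 := ratio_est a b ha (le_of_lt hab) hb n (by rw [← hN]; linarith)
  -- floor error
  have hfloor : Mr ^ (a-b) - (qr*N) ^ (a-b) ≤ 6/5 * ((qr*N) ^ (a-b) * (qr*N)⁻¹) := by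
    set u := (qr*N)⁻¹ with hu
    have hu0 : 0 < u := by positivity
    have hu6 : u ≤ 1/6 := by
      rw [hu, inv_le_comm₀ hqrN0 (by norm_num)]
      linarith
    have huc : (qr*N) * (1 - u) = qr*N - 1 := by
      rw [hu, mul_sub, mul_one, mul_inv_cancel₀ (ne_of_gt hqrN0)]
    have s1 : Mr ^ (a-b) ≤ (qr*N - 1) ^ (a-b) :=
      Real.rpow_le_rpow_of_nonpos (by linarith) hM_ge (by linarith)
    have s2 : (qr*N - 1) ^ (a-b) = (qr*N)^(a-b) * (1-u)^(a-b) := by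
      rw [← huc, Real.mul_rpow (le_of_lt hqrN0) (by linarith)]
    have s3 : (1-u)^(a-b) ≤ (1-u)^(-1 : ℝ) :=
      Real.rpow_le_rpow_of_exponent_ge (by linarith) (by linarith) (by linarith)
    have s4 : (1-u)^(-1:ℝ) ≤ 1 + 6/5*u := by
      rw [Real.rpow_neg_one]
      have hh1 : (0:ℝ) < 1 - u := by linarith
      have hh2 : 1 ≤ (1-u) * (1 + 6/5*u) := by nlinarith
      calc (1-u)⁻¹ ≤ (1-u)⁻¹ * ((1-u) * (1 + 6/5*u)) :=
            le_mul_of_one_le_right (by positivity) hh2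
        _ = 1 + 6/5*u := by field_simp
    have hq0 : (0:ℝ) < (qr*N)^(a-b) := Real.rpow_pos_of_pos hqrN0 _
    calc Mr ^ (a-b) - (qr*N) ^ (a-b) ≤ (qr*N)^(a-b) * (1 + 6/5*u) - (qr*N)^(a-b) := by
          rw [s2] at s1
          nlinarith
      _ = 6/5 * ((qr*N)^(a-b) * u) := by ring
  -- individual bounds vs N
  have h2b : (qr*N) ^ (a-b) ≤ qs^(a-b) * N^(a-b) := by
    rw [← Real.mul_rpow (le_of_lt hqs) hN0']
    exact Real.rpow_le_rpow_of_nonpos (by positivity) (by nlinarith) (by linarith)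
  have h2c : (qr*N)⁻¹ ≤ qs⁻¹ * N⁻¹ := by
    rw [← mul_inv]
    apply inv_anti₀ (by positivity)
    nlinarith
  have h2d : N^(a-b) * N⁻¹ ≤ N^(-(1-a)) := by
    rw [← Real.rpow_neg_one N, ← Real.rpow_add hN0]
    exact Real.rpow_le_rpow_of_exponent_le (by linarith) (by linarith)
  -- split
  have hsplit : (qr*N)^(a-b) = qr^(a-b) * N^(a-b) := Real.mul_rpow (by linarith) hN0'
  set S1m := ∑ k ∈ Icc 1 m, (k:ℝ) ^ (-a)
  set Sbm := ∑ k ∈ Icc 1 m, (k:ℝ) ^ (-b)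
  set S1n := ∑ k ∈ Icc 1 n, (k:ℝ) ^ (-a)
  set Sbn := ∑ k ∈ Icc 1 n, (k:ℝ) ^ (-b)
  rw [← hMr] at hX1
  rw [← hN] at hX3
  have nn : 0 ≤ Mr^(a-b) - (qr*N)^(a-b) := by
    have := Real.rpow_le_rpow_of_nonpos hM0 hM_le (by linarith : a - b ≤ 0)
    linarith
  clear_value N m Mr S1m Sbm S1n Sbn
  have decomp : Sbm/S1m - qr^(a-b) * (Sbn/S1n)
      = (Sbm/S1m - (1-a)/(1-b) * Mr^(a-b))
        + ((1-a)/(1-b)) * (Mr^(a-b) - (qr*N)^(a-b))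
        + qr^(a-b) * ((1-a)/(1-b) * N^(a-b) - Sbn/S1n) := by
    rw [hsplit]; ring
  have habs : |Sbm/S1m - qr^(a-b) * (Sbn/S1n)|
      ≤ |Sbm/S1m - (1-a)/(1-b) * Mr^(a-b)|
        + ((1-a)/(1-b)) * (Mr^(a-b) - (qr*N)^(a-b))
        + qr^(a-b) * |(1-a)/(1-b) * N^(a-b) - Sbn/S1n| := by
    rw [decomp]
    refine (abs_add_three _ _ _).trans ?_
    rw [abs_mul, abs_of_pos hA, abs_of_nonneg nn, abs_mul, abs_of_nonneg hqrab0]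
  have hX3' : |(1-a)/(1-b) * N^(a-b) - Sbn/S1n| ≤ 5/4 * ((1-a)/(1-b)) * N^(-(1-a)) := by
    rw [abs_sub_comm]; exact hX3
  -- combine all
  have bound1 : |Sbm/S1m - (1-a)/(1-b) * Mr^(a-b)| ≤ 3/2 * ((1-a)/(1-b)) * (qs⁻¹ * N^(-(1-a))) := by
    refine hX1.trans ?_
    have i1 := mul_le_mul_of_nonneg_left hMinv (le_of_lt hA)
    have i2 := mul_le_mul_of_nonneg_left hqsexp
      (by positivity : (0:ℝ) ≤ (1-a)/(1-b) * N^(-(1-a)))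
    linarith
  have bound2 : ((1-a)/(1-b)) * (Mr^(a-b) - (qr*N)^(a-b))
      ≤ 6/5 * ((1-a)/(1-b)) * (qs^(a-b) * qs⁻¹ * N^(-(1-a))) := by
    have c1 : (qr*N)^(a-b) * (qr*N)⁻¹ ≤ (qs^(a-b) * N^(a-b)) * (qs⁻¹ * N⁻¹) :=
      mul_le_mul h2b h2c (by positivity) (by positivity)
    have c2 : (qs^(a-b) * N^(a-b)) * (qs⁻¹ * N⁻¹) = qs^(a-b) * qs⁻¹ * (N^(a-b) * N⁻¹) := by ring
    have c3 : qs^(a-b) * qs⁻¹ * (N^(a-b) * N⁻¹) ≤ qs^(a-b) * qs⁻¹ * N^(-(1-a)) := by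
      apply mul_le_mul_of_nonneg_left h2d (by positivity)
    have c4 : Mr^(a-b) - (qr*N)^(a-b) ≤ 6/5 * (qs^(a-b)*qs⁻¹*N^(-(1-a))) := by
      linarith
    calc ((1-a)/(1-b)) * (Mr^(a-b) - (qr*N)^(a-b))
        ≤ ((1-a)/(1-b)) * (6/5 * (qs^(a-b)*qs⁻¹*N^(-(1-a)))) :=
          mul_le_mul_of_nonneg_left c4 (le_of_lt hA)
      _ = 6/5 * ((1-a)/(1-b)) * (qs^(a-b) * qs⁻¹ * N^(-(1-a))) := by ring
  have bound3 : qr^(a-b) * |(1-a)/(1-b) * N^(a-b) - Sbn/S1n|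
      ≤ 5/4 * ((1-a)/(1-b)) * (qs^(a-b) * N^(-(1-a))) := by
    have := mul_le_mul hqrab hX3' (abs_nonneg _) (by positivity)
    linarith
  have hfin : (0:ℝ) < qs^(a-b) := Real.rpow_pos_of_pos hqs _
  refine habs.trans ?_
  have f1 := mul_le_mul_of_nonneg_left hqsab
    (by positivity : (0:ℝ) ≤ 3/2 * ((1-a)/(1-b)) * (qs⁻¹ * N^(-(1-a))))
  have f2 := mul_le_mul_of_nonneg_left hqs1
    (by positivity : (0:ℝ) ≤ 5/4 * ((1-a)/(1-b)) * (qs^(a-b) * N^(-(1-a))))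
  have g0 : (0:ℝ) < ((1-a)/(1-b)) * qs^(a-b) * qs⁻¹ * N^(-(1-a)) := by positivity
  linarith [bound1, bound2, bound3, f1, f2, g0]

private lemma pair_bound (γ₁ a : ℝ) (hγ₁ : 0 < γ₁) (ha0 : 0 < a) (ha1 : a < 1)
    (ℓ : ℕ) (hℓ2 : 2 ≤ ℓ) (hb1 : a * (ℓ:ℝ) < 1)
    (qr qs : ℝ) (hqs : 0 < qs) (hqsr : qs ≤ qr) (hqr1 : qr ≤ 1)
    (Γ : ℕ → ℕ → ℝ) (hΓ : ∀ L n, Γ L n = ∑ k ∈ Icc 1 n, (γ₁ * (k:ℝ)^(-a))^L)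
    (n : ℕ) (h6 : (6:ℝ) ≤ qs * n) (h6' : (6:ℝ) ≤ (qs * n)^(1-a)) :
    |Γ ℓ ⌊qr * (n:ℝ)⌋₊ / Γ 1 ⌊qr * (n:ℝ)⌋₊ - qr ^ (-(a*((ℓ:ℝ)-1))) * (Γ ℓ n / Γ 1 n)|
      ≤ 4 * ((1-a)/(1-a*(ℓ:ℝ))) * qs⁻¹ * (γ₁ * qs^(-a))^(ℓ-1) * (n:ℝ)^(-(1-a)) := by
  have hℓR : (2:ℝ) ≤ (ℓ:ℝ) := by exact_mod_cast hℓ2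
  have hab : a < a * (ℓ:ℝ) := by nlinarith
  have hn6 : (6:ℝ) ≤ (n:ℝ) := by nlinarith [Nat.cast_nonneg (α := ℝ) n]
  have hn1 : 1 ≤ n := by exact_mod_cast (by linarith : (1:ℝ) ≤ (n:ℝ))
  have hm1 : 1 ≤ ⌊qr * (n:ℝ)⌋₊ := by
    apply Nat.le_floor
    have : qs * n ≤ qr * n := by nlinarith [Nat.cast_nonneg (α := ℝ) n]
    push_cast
    linarith
  have hΓ1 : ∀ m : ℕ, Γ 1 m = γ₁ * ∑ k ∈ Icc 1 m, (k:ℝ)^(-a) := by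
    intro m
    rw [hΓ, Finset.mul_sum]
    exact sum_congr rfl fun k _ => by rw [pow_one]
  have hΓℓ : ∀ m : ℕ, Γ ℓ m = γ₁^ℓ * ∑ k ∈ Icc 1 m, (k:ℝ)^(-(a*(ℓ:ℝ))) := by
    intro m
    rw [hΓ, Finset.mul_sum]
    refine sum_congr rfl fun k hk => ?_
    have hk0 : (0:ℝ) < (k:ℝ) := by
      have := (Finset.mem_Icc.mp hk).1
      exact_mod_cast Nat.lt_of_lt_of_le Nat.zero_lt_one this
    rw [mul_pow, ← Real.rpow_natCast ((k:ℝ)^(-a)) ℓ, ← Real.rpow_mul (le_of_lt hk0),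
      neg_mul]
  have hSpos : ∀ (x : ℝ) (m : ℕ), 1 ≤ m → (0:ℝ) < ∑ k ∈ Icc 1 m, (k:ℝ)^(-x) := by
    intro x m hm
    apply Finset.sum_pos
    · intro k hk
      have : (0:ℝ) < (k:ℝ) := by
        have := (Finset.mem_Icc.mp hk).1
        exact_mod_cast Nat.lt_of_lt_of_le Nat.zero_lt_one this
      exact Real.rpow_pos_of_pos this _
    · exact Finset.nonempty_Icc.mpr hm
  have hγℓ : γ₁^ℓ = γ₁^(ℓ-1) * γ₁ := by
    rw [← pow_succ]
    congr 1
    omega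
  have hrat : ∀ m : ℕ, 1 ≤ m → Γ ℓ m / Γ 1 m
      = γ₁^(ℓ-1) * ((∑ k ∈ Icc 1 m, (k:ℝ)^(-(a*(ℓ:ℝ)))) / (∑ k ∈ Icc 1 m, (k:ℝ)^(-a))) := by
    intro m hm
    rw [hΓℓ, hΓ1]
    have hSa := hSpos a m hm
    field_simp
    rw [hγℓ]
    ring
  have hqrexp : qr ^ (-(a*((ℓ:ℝ)-1))) = qr ^ (a - a*(ℓ:ℝ)) := by
    congr 1
    ring
  have hpow : (γ₁ * qs^(-a))^(ℓ-1) = γ₁^(ℓ-1) * qs^(a-a*(ℓ:ℝ)) := by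
    rw [mul_pow]
    congr 1
    rw [← Real.rpow_natCast (qs^(-a)) (ℓ-1), ← Real.rpow_mul (le_of_lt hqs)]
    congr 1
    have hc : ((ℓ-1 : ℕ):ℝ) = (ℓ:ℝ) - 1 := by
      have : (1:ℕ) ≤ ℓ := by omega
      push_cast [this]
      ring
    rw [hc]
    ring
  rw [hrat _ hm1, hrat n hn1, hqrexp]
  have hinner := key_bound a (a*(ℓ:ℝ)) qr qs ha0 hab hb1 hqs hqsr hqr1 n h6 h6'
  set X := (∑ k ∈ Icc 1 ⌊qr * (n:ℝ)⌋₊, (k:ℝ)^(-(a*(ℓ:ℝ)))) / (∑ k ∈ Icc 1 ⌊qr * (n:ℝ)⌋₊, (k:ℝ)^(-a))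
  set Y := (∑ k ∈ Icc 1 n, (k:ℝ)^(-(a*(ℓ:ℝ)))) / (∑ k ∈ Icc 1 n, (k:ℝ)^(-a))
  have hγpos : (0:ℝ) < γ₁^(ℓ-1) := pow_pos hγ₁ _
  calc |γ₁^(ℓ-1) * X - qr^(a-a*(ℓ:ℝ)) * (γ₁^(ℓ-1) * Y)|
      = γ₁^(ℓ-1) * |X - qr^(a-a*(ℓ:ℝ)) * Y| := by
        rw [show γ₁^(ℓ-1) * X - qr^(a-a*(ℓ:ℝ)) * (γ₁^(ℓ-1) * Y)
            = γ₁^(ℓ-1) * (X - qr^(a-a*(ℓ:ℝ)) * Y) by ring, abs_mul, abs_of_pos hγpos]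
    _ ≤ γ₁^(ℓ-1) * (4 * ((1-a)/(1-a*(ℓ:ℝ))) * qs⁻¹ * qs^(a-a*(ℓ:ℝ)) * (n:ℝ)^(-(1-a))) :=
        mul_le_mul_of_nonneg_left hinner (le_of_lt hγpos)
    _ = 4 * ((1-a)/(1-a*(ℓ:ℝ))) * qs⁻¹ * (γ₁ * qs^(-a))^(ℓ-1) * (n:ℝ)^(-(1-a)) := by
        rw [hpow]
        ring

/-- Bound on the first bias term `Bias⁽¹⁾(n)` of the ML2Rgodic estimator:
`|Bias⁽¹⁾(n)| ≤ C_{a,q,R} n^{-(1-a)}` for `n ≥ ⌈6^{1/(1-a)}/q*⌉`. -/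
theorem stmt_18 (γ₁ a : ℝ) (hγ₁ : 0 < γ₁) (ha : a ∈ Set.Ioo (0 : ℝ) 1)
    (R M : ℕ) (hR : 2 ≤ R) (hM : 2 ≤ M) (haR : a * ((R : ℝ) + 1) < 1)
    (c : ℕ → ℝ) (W : ℕ → ℝ)
    (q : ℕ → ℝ) (hq : ∀ r ∈ Icc 1 R, 0 < q r) (hqsum : ∑ r ∈ Icc 1 R, q r = 1)
    (Γ : ℕ → ℕ → ℝ)
    (hΓ : ∀ L n, Γ L n = ∑ k ∈ Icc 1 n, (γ₁ * (k : ℝ) ^ (-a)) ^ L)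
    (qstar Wsup : ℝ)
    (hqstar : qstar = (Icc 1 R).inf' (Finset.nonempty_Icc.mpr (by omega)) q)
    (hWsup : Wsup = (Icc 1 R).sup' (Finset.nonempty_Icc.mpr (by omega)) (fun r => |W r|))
    (n : ℕ) (hn : ⌈(6 : ℝ) ^ (1 / (1 - a)) / qstar⌉₊ ≤ n) :
    |∑ ℓ ∈ Icc 2 R, c ℓ *
      ((Γ ℓ ⌊q 1 * (n : ℝ)⌋₊ / Γ 1 ⌊q 1 * (n : ℝ)⌋₊ -
          q 1 ^ (-(a * ((ℓ : ℝ) - 1))) * (Γ ℓ n / Γ 1 n)) * W 1 +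
        ∑ r ∈ Icc 2 R,
          ((M : ℝ) ^ (-((ℓ : ℝ) - 1)) - 1) * (M : ℝ) ^ (-(((r : ℝ) - 2) * ((ℓ : ℝ) - 1))) *
            W r *
            (Γ ℓ ⌊q r * (n : ℝ)⌋₊ / Γ 1 ⌊q r * (n : ℝ)⌋₊ -
              q r ^ (-(a * ((ℓ : ℝ) - 1))) * (Γ ℓ n / Γ 1 n)))| ≤
      (6 * ((2 - a * ((R : ℝ) + 1)) / (1 - a * ((R : ℝ) + 1))) * Wsup * qstar⁻¹ *
        ∑ ℓ ∈ Icc 2 R, (γ₁ * qstar ^ (-a)) ^ (ℓ - 1) *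
          (1 + ∑ r ∈ Icc 2 R,
            |((M : ℝ) ^ (-((ℓ : ℝ) - 1)) - 1) *
              (M : ℝ) ^ (-(((r : ℝ) - 2) * ((ℓ : ℝ) - 1)))|) * |c ℓ|) *
        (n : ℝ) ^ (-(1 - a)) := by
  obtain ⟨ha0, ha1⟩ := ha
  have h1a : (0:ℝ) < 1 - a := by linarith
  have h1R : (1:ℕ) ∈ Icc 1 R := mem_Icc.mpr ⟨le_refl 1, by omega⟩
  have hqspos : 0 < qstar := by
    rw [hqstar, Finset.lt_inf'_iff]
    exact hq
  have hqsle : ∀ r ∈ Icc 1 R, qstar ≤ q r := fun r hr => hqstar ▸ Finset.inf'_le q hr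
  have hqle1 : ∀ r ∈ Icc 1 R, q r ≤ 1 := by
    intro r hr
    rw [← hqsum]
    exact Finset.single_le_sum (fun i hi => (hq i hi).le) hr
  have hqs1 : qstar ≤ 1 := le_trans (hqsle 1 h1R) (hqle1 1 h1R)
  have hWle : ∀ r ∈ Icc 1 R, |W r| ≤ Wsup := by
    intro r hr
    rw [hWsup]
    exact Finset.le_sup' (fun r => |W r|) hr
  have hWsup0 : 0 ≤ Wsup := le_trans (abs_nonneg _) (hWle 1 h1R)
  have hx : (6:ℝ)^(1/(1-a)) / qstar ≤ n := Nat.ceil_le.mp hn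
  have hx' : (6:ℝ)^(1/(1-a)) ≤ qstar * n := by
    rw [div_le_iff₀ hqspos] at hx
    linarith
  have h6pow : (6:ℝ) ≤ 6^(1/(1-a)) := by
    have h1 : (1:ℝ) ≤ 1/(1-a) := by
      rw [le_div_iff₀ h1a, one_mul]
      linarith
    calc (6:ℝ) = 6^(1:ℝ) := (Real.rpow_one 6).symm
      _ ≤ 6^(1/(1-a)) := Real.rpow_le_rpow_of_exponent_le (by norm_num) h1
  have h6 : (6:ℝ) ≤ qstar * n := le_trans h6pow hx'
  have h6' : (6:ℝ) ≤ (qstar * n)^(1-a) := by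
    have e : ((6:ℝ)^(1/(1-a)))^(1-a) = 6 := by
      rw [← Real.rpow_mul (by norm_num : (0:ℝ) ≤ 6), one_div_mul_cancel (ne_of_gt h1a),
        Real.rpow_one]
    calc (6:ℝ) = ((6:ℝ)^(1/(1-a)))^(1-a) := e.symm
      _ ≤ (qstar*n)^(1-a) := Real.rpow_le_rpow (by positivity) hx' (le_of_lt h1a)
  have hn0 : (0:ℝ) < (n:ℝ) := by nlinarith [Nat.cast_nonneg (α := ℝ) n]
  have hdenR : (0:ℝ) < 1 - a*((R:ℝ)+1) := by linarith
  have hK0 : (0:ℝ) < (2 - a*((R:ℝ)+1))/(1 - a*((R:ℝ)+1)) := by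
    apply div_pos (by linarith) hdenR
  have hNab0 : (0:ℝ) < (n:ℝ)^(-(1-a)) := Real.rpow_pos_of_pos hn0 _
  have hPpos : ∀ ℓ : ℕ, (0:ℝ) < (γ₁ * qstar^(-a))^(ℓ-1) :=
    fun ℓ => pow_pos (mul_pos hγ₁ (Real.rpow_pos_of_pos hqspos _)) _
  -- the per-pair bound with the final constant
  have hDall : ∀ ℓ ∈ Icc 2 R, ∀ r ∈ Icc 1 R,
      |Γ ℓ ⌊q r * (n:ℝ)⌋₊ / Γ 1 ⌊q r * (n:ℝ)⌋₊ - q r ^ (-(a*((ℓ:ℝ)-1))) * (Γ ℓ n / Γ 1 n)|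
        ≤ 6 * ((2 - a*((R:ℝ)+1))/(1 - a*((R:ℝ)+1))) * qstar⁻¹
            * (γ₁ * qstar^(-a))^(ℓ-1) * (n:ℝ)^(-(1-a)) := by
    intro ℓ hℓ r hr
    obtain ⟨hℓ2, hℓR⟩ := mem_Icc.mp hℓ
    have hℓRc : (ℓ:ℝ) ≤ (R:ℝ) := by exact_mod_cast hℓR
    have hb1 : a*(ℓ:ℝ) < 1 := by nlinarith
    refine (pair_bound γ₁ a hγ₁ ha0 ha1 ℓ hℓ2 hb1 (q r) qstar hqspos (hqsle r hr)
      (hqle1 r hr) Γ hΓ n h6 h6').trans ?_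
    have s1 : (1-a)/(1-a*(ℓ:ℝ)) ≤ 1/(1 - a*((R:ℝ)+1)) :=
      div_le_div₀ (by norm_num) (by linarith) hdenR (by nlinarith)
    have s2 : (2 - a*((R:ℝ)+1))/(1 - a*((R:ℝ)+1)) - 1/(1 - a*((R:ℝ)+1)) = 1 := by
      field_simp
      ring
    have hAK : 4*((1-a)/(1-a*(ℓ:ℝ))) ≤ 6*((2 - a*((R:ℝ)+1))/(1 - a*((R:ℝ)+1))) := by
      linarith
    have hpos : (0:ℝ) ≤ qstar⁻¹ * (γ₁ * qstar^(-a))^(ℓ-1) * (n:ℝ)^(-(1-a)) := by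
      have := hPpos ℓ
      positivity
    calc 4*((1-a)/(1-a*(ℓ:ℝ))) * qstar⁻¹ * (γ₁ * qstar^(-a))^(ℓ-1) * (n:ℝ)^(-(1-a))
        = (4*((1-a)/(1-a*(ℓ:ℝ)))) * (qstar⁻¹ * (γ₁ * qstar^(-a))^(ℓ-1) * (n:ℝ)^(-(1-a))) := by
          ring
      _ ≤ (6*((2 - a*((R:ℝ)+1))/(1 - a*((R:ℝ)+1))))
            * (qstar⁻¹ * (γ₁ * qstar^(-a))^(ℓ-1) * (n:ℝ)^(-(1-a))) :=
          mul_le_mul_of_nonneg_right hAK hpos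
      _ = 6 * ((2 - a*((R:ℝ)+1))/(1 - a*((R:ℝ)+1))) * qstar⁻¹
            * (γ₁ * qstar^(-a))^(ℓ-1) * (n:ℝ)^(-(1-a)) := by ring
  -- assembly
  have hBpos : ∀ ℓ : ℕ, (0:ℝ) ≤ 6 * ((2 - a*((R:ℝ)+1))/(1 - a*((R:ℝ)+1))) * qstar⁻¹
      * (γ₁ * qstar^(-a))^(ℓ-1) * (n:ℝ)^(-(1-a)) := by
    intro ℓ
    have := hPpos ℓ
    positivity
  have step : ∀ ℓ ∈ Icc 2 R,
      |c ℓ * ((Γ ℓ ⌊q 1 * (n : ℝ)⌋₊ / Γ 1 ⌊q 1 * (n : ℝ)⌋₊ -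
          q 1 ^ (-(a * ((ℓ : ℝ) - 1))) * (Γ ℓ n / Γ 1 n)) * W 1 +
        ∑ r ∈ Icc 2 R,
          ((M : ℝ) ^ (-((ℓ : ℝ) - 1)) - 1) * (M : ℝ) ^ (-(((r : ℝ) - 2) * ((ℓ : ℝ) - 1))) *
            W r *
            (Γ ℓ ⌊q r * (n : ℝ)⌋₊ / Γ 1 ⌊q r * (n : ℝ)⌋₊ -
              q r ^ (-(a * ((ℓ : ℝ) - 1))) * (Γ ℓ n / Γ 1 n)))|
      ≤ 6 * ((2 - a * ((R : ℝ) + 1)) / (1 - a * ((R : ℝ) + 1))) * Wsup * qstar⁻¹ *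
          ((γ₁ * qstar ^ (-a)) ^ (ℓ - 1) *
          (1 + ∑ r ∈ Icc 2 R,
            |((M : ℝ) ^ (-((ℓ : ℝ) - 1)) - 1) *
              (M : ℝ) ^ (-(((r : ℝ) - 2) * ((ℓ : ℝ) - 1)))|) * |c ℓ|) *
          (n : ℝ) ^ (-(1 - a)) := by
    intro ℓ hℓ
    set B := 6 * ((2 - a*((R:ℝ)+1))/(1 - a*((R:ℝ)+1))) * qstar⁻¹
      * (γ₁ * qstar^(-a))^(ℓ-1) * (n:ℝ)^(-(1-a)) with hB
    have hB0 : 0 ≤ B := hBpos ℓ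
    have hterm1 : |(Γ ℓ ⌊q 1 * (n : ℝ)⌋₊ / Γ 1 ⌊q 1 * (n : ℝ)⌋₊ -
        q 1 ^ (-(a * ((ℓ : ℝ) - 1))) * (Γ ℓ n / Γ 1 n)) * W 1| ≤ B * Wsup := by
      rw [abs_mul]
      exact mul_le_mul (hDall ℓ hℓ 1 h1R) (hWle 1 h1R) (abs_nonneg _) hB0
    have hterm2 : ∀ r ∈ Icc 2 R,
        |((M : ℝ) ^ (-((ℓ : ℝ) - 1)) - 1) * (M : ℝ) ^ (-(((r : ℝ) - 2) * ((ℓ : ℝ) - 1))) *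
            W r *
            (Γ ℓ ⌊q r * (n : ℝ)⌋₊ / Γ 1 ⌊q r * (n : ℝ)⌋₊ -
              q r ^ (-(a * ((ℓ : ℝ) - 1))) * (Γ ℓ n / Γ 1 n))|
        ≤ |((M : ℝ) ^ (-((ℓ : ℝ) - 1)) - 1) * (M : ℝ) ^ (-(((r : ℝ) - 2) * ((ℓ : ℝ) - 1)))|
            * (Wsup * B) := by
      intro r hr
      have hr' : r ∈ Icc 1 R := by
        rw [mem_Icc] at hr ⊢
        omega
      rw [abs_mul, abs_mul]
      rw [mul_assoc]
      apply mul_le_mul_of_nonneg_left _ (abs_nonneg _)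
      exact mul_le_mul (hWle r hr') (hDall ℓ hℓ r hr') (abs_nonneg _) hWsup0
    rw [abs_mul]
    have hsum : |(Γ ℓ ⌊q 1 * (n : ℝ)⌋₊ / Γ 1 ⌊q 1 * (n : ℝ)⌋₊ -
          q 1 ^ (-(a * ((ℓ : ℝ) - 1))) * (Γ ℓ n / Γ 1 n)) * W 1 +
        ∑ r ∈ Icc 2 R,
          ((M : ℝ) ^ (-((ℓ : ℝ) - 1)) - 1) * (M : ℝ) ^ (-(((r : ℝ) - 2) * ((ℓ : ℝ) - 1))) *
            W r *
            (Γ ℓ ⌊q r * (n : ℝ)⌋₊ / Γ 1 ⌊q r * (n : ℝ)⌋₊ -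
              q r ^ (-(a * ((ℓ : ℝ) - 1))) * (Γ ℓ n / Γ 1 n))|
        ≤ B * Wsup + (∑ r ∈ Icc 2 R,
            |((M : ℝ) ^ (-((ℓ : ℝ) - 1)) - 1) *
              (M : ℝ) ^ (-(((r : ℝ) - 2) * ((ℓ : ℝ) - 1)))|) * (Wsup * B) := by
      refine (abs_add_le _ _).trans ?_
      have i2 : |∑ r ∈ Icc 2 R,
          ((M : ℝ) ^ (-((ℓ : ℝ) - 1)) - 1) * (M : ℝ) ^ (-(((r : ℝ) - 2) * ((ℓ : ℝ) - 1))) *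
            W r *
            (Γ ℓ ⌊q r * (n : ℝ)⌋₊ / Γ 1 ⌊q r * (n : ℝ)⌋₊ -
              q r ^ (-(a * ((ℓ : ℝ) - 1))) * (Γ ℓ n / Γ 1 n))|
          ≤ (∑ r ∈ Icc 2 R,
            |((M : ℝ) ^ (-((ℓ : ℝ) - 1)) - 1) *
              (M : ℝ) ^ (-(((r : ℝ) - 2) * ((ℓ : ℝ) - 1)))|) * (Wsup * B) := by
        refine (Finset.abs_sum_le_sum_abs _ _).trans ?_
        rw [Finset.sum_mul]
        exact Finset.sum_le_sum hterm2
      linarith [hterm1, i2]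
    calc |c ℓ| * |_| ≤ |c ℓ| * (B * Wsup + (∑ r ∈ Icc 2 R,
            |((M : ℝ) ^ (-((ℓ : ℝ) - 1)) - 1) *
              (M : ℝ) ^ (-(((r : ℝ) - 2) * ((ℓ : ℝ) - 1)))|) * (Wsup * B)) :=
          mul_le_mul_of_nonneg_left hsum (abs_nonneg _)
      _ = 6 * ((2 - a * ((R : ℝ) + 1)) / (1 - a * ((R : ℝ) + 1))) * Wsup * qstar⁻¹ *
          ((γ₁ * qstar ^ (-a)) ^ (ℓ - 1) *
          (1 + ∑ r ∈ Icc 2 R,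
            |((M : ℝ) ^ (-((ℓ : ℝ) - 1)) - 1) *
              (M : ℝ) ^ (-(((r : ℝ) - 2) * ((ℓ : ℝ) - 1)))|) * |c ℓ|) *
          (n : ℝ) ^ (-(1 - a)) := by
        rw [hB]
        ring
  refine (Finset.abs_sum_le_sum_abs _ _).trans ?_
  refine (Finset.sum_le_sum step).trans (le_of_eq ?_)
  rw [Finset.mul_sum, Finset.sum_mul]
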